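/- Let S be a proper subtorus of a maximal torus T of G = SL_{n+1}(K), and let W(S) = N_G(S)/C_G(S) viewed as a subgroup of the Weyl group Sym_{n+1} (assuming C_G(S) = T). Then W(S) is not a 2-transitive subgroup of Sym_{n+1}. -/

import Mathlib

open Finset


/-- In an algebraically closed field, if every unit satisfies `t ^ c = 1` then `c = 0`. -/
lemma exp_zero {K : Type*} [Field K] [IsAlgClosed K] {c : ℤ}
    (h : ∀ t : Kˣ, t ^ c = 1) : c = 0 := by
  by_contra hc
  have hk : c.natAbs ≠ 0 := Int.natAbs_ne_zero.mpr hc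
  have h1 : ∀ t : Kˣ, t ^ c.natAbs = 1 := by
    intro t
    rcases Int.natAbs_eq c with h' | h'
    · have := h t; rw [h', zpow_natCast] at this; exact this
    · have := h t; rw [h', zpow_neg, inv_eq_one, zpow_natCast] at this; exact this
  have hp : (Polynomial.X ^ c.natAbs - Polynomial.C (1 : K)) ≠ 0 :=
    Polynomial.X_pow_sub_C_ne_zero (Nat.pos_of_ne_zero hk) 1
  have hfin : Set.Finite {x : K | x ^ c.natAbs = 1} := by
    refine Set.Finite.subset (Polynomial.finite_setOf_isRoot hp) ?_
    intro x hx
    simp only [Set.mem_setOf_eq, Polynomial.IsRoot, Polynomial.eval_sub, Polynomial.eval_pow,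
      Polynomial.eval_X, Polynomial.eval_C]
    simpa [sub_eq_zero] using hx
  have : Set.Finite (Set.univ : Set K) := by
    have hsub : (Set.univ : Set K) ⊆ insert (0 : K) {x : K | x ^ c.natAbs = 1} := by
      intro x _
      rcases eq_or_ne x 0 with rfl | hx
      · exact Set.mem_insert _ _
      · refine Set.mem_insert_of_mem _ ?_
        have := h1 (Units.mk0 x hx)
        have := congrArg (Units.val) this
        simpa using this
    exact Set.Finite.subset (hfin.insert 0) hsub
  exact Set.infinite_univ this

lemma zpow_sum' {G : Type*} [CommGroup G] {ι : Type*} (x : G) (s : Finset ι) (c : ι → ℤ) :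
    x ^ (∑ i ∈ s, c i) = ∏ i ∈ s, x ^ c i := by
  induction s using Finset.cons_induction with
  | empty => simp
  | cons a s ha ih => rw [Finset.sum_cons, Finset.prod_cons, zpow_add, ih]

/-- Swapping the double product for monomial parametrizations. -/
lemma prod_swap_exp {G : Type*} [CommGroup G] {N m : ℕ} (x : Fin m → G)
    (A : Fin N → Fin m → ℤ) (γ : Fin N → ℤ) :
    ∏ i, (∏ j, x j ^ A i j) ^ γ i = ∏ j, x j ^ (∑ i, γ i * A i j) := by
  have : ∀ i, (∏ j, x j ^ A i j) ^ γ i = ∏ j, x j ^ (γ i * A i j) := by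
    intro i
    rw [← Finset.prod_zpow]
    exact Finset.prod_congr rfl fun j _ => by rw [← zpow_mul, mul_comm (A i j)]
  rw [Finset.prod_congr rfl fun i _ => this i, Finset.prod_comm]
  exact Finset.prod_congr rfl fun j _ => (zpow_sum' _ _ _).symm
noncomputable def divKx {K : Type*} [Field K] [IsAlgClosed K] :
    DivisibleBy (Additive Kˣ) ℤ := by
  apply divisibleByOfSMulRightSurj
  intro n hn x
  set u : Kˣ := Additive.toMul x with hu
  have hk : 0 < n.natAbs := Int.natAbs_pos.mpr hn
  obtain ⟨z, hz⟩ := IsAlgClosed.exists_pow_nat_eq (u : K) hk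
  have hz0 : z ≠ 0 := by
    intro h
    rw [h, zero_pow hk.ne'] at hz
    exact (Units.ne_zero u) hz.symm
  have hzu : (Units.mk0 z hz0) ^ n.natAbs = u := by
    ext; push_cast; exact hz
  rcases Int.natAbs_eq n with h' | h'
  · refine ⟨Additive.ofMul (Units.mk0 z hz0), ?_⟩
    show Additive.ofMul ((Units.mk0 z hz0) ^ n) = x
    rw [h', zpow_natCast, hzu]; simp [hu]
  · refine ⟨Additive.ofMul (Units.mk0 z hz0)⁻¹, ?_⟩
    show Additive.ofMul ((Units.mk0 z hz0)⁻¹ ^ n) = x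
    rw [h', inv_zpow, zpow_neg, inv_inv, zpow_natCast, hzu]; simp [hu]

/-- If the character `γ ↦ ∏ dᵢ^{γᵢ}` kills the kernel of the exponent matrix, then `d`
is in the image of the monomial map. -/
lemma mem_image_of_ker {K : Type*} [Field K] [IsAlgClosed K] {N m : ℕ}
    (A : Fin N → Fin m → ℤ) (d : Fin N → Kˣ)
    (hker : ∀ γ : Fin N → ℤ, (∀ j, ∑ i, γ i * A i j = 0) → (∏ i, d i ^ γ i) = 1) :
    ∃ x : Fin m → Kˣ, ∀ i, d i = ∏ j, x j ^ A i j := by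
  classical
  let B : (Fin N → ℤ) →ₗ[ℤ] (Fin m → ℤ) :=
    { toFun := fun γ j => ∑ i, γ i * A i j
      map_add' := by
        intro γ δ; funext j
        simp [add_mul, Finset.sum_add_distrib]
      map_smul' := by
        intro c γ; funext j
        simp [Finset.mul_sum, mul_assoc] }
  have hBapply : ∀ (γ : Fin N → ℤ) (j : Fin m), B γ j = ∑ l, γ l * A l j := fun γ j => rfl
  have hprod_add : ∀ γ δ : Fin N → ℤ,
      (∏ i, d i ^ (γ + δ) i) = (∏ i, d i ^ γ i) * (∏ i, d i ^ δ i) := by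
    intro γ δ
    rw [← Finset.prod_mul_distrib]
    exact Finset.prod_congr rfl fun i _ => by rw [Pi.add_apply, zpow_add]
  have hprod_smul : ∀ (c : ℤ) (γ : Fin N → ℤ),
      (∏ i, d i ^ (c • γ) i) = (∏ i, d i ^ γ i) ^ c := by
    intro c γ
    rw [← Finset.prod_zpow]
    exact Finset.prod_congr rfl fun i _ => by
      rw [Pi.smul_apply, smul_eq_mul, mul_comm, zpow_mul]
  let dhat : (Fin N → ℤ) →ₗ[ℤ] Additive Kˣ :=
    { toFun := fun γ => Additive.ofMul (∏ i, d i ^ γ i)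
      map_add' := by
        intro γ δ
        show Additive.ofMul _ = Additive.ofMul _ + Additive.ofMul _
        rw [hprod_add, ofMul_mul]
      map_smul' := by
        intro c γ
        show Additive.ofMul _ = c • Additive.ofMul _
        rw [hprod_smul, ofMul_zpow] }
  have hdhat : ∀ γ : Fin N → ℤ, dhat γ = Additive.ofMul (∏ i, d i ^ γ i) := fun γ => rfl
  have hle : LinearMap.ker B ≤ LinearMap.ker dhat := by
    intro γ hγ
    rw [LinearMap.mem_ker] at hγ ⊢
    have hj : ∀ j, ∑ i, γ i * A i j = 0 := fun j => by
      rw [← hBapply γ j, hγ]; rfl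
    have h1 : (∏ i, d i ^ γ i) = 1 := hker γ hj
    rw [hdhat, h1]; rfl
  haveI : DivisibleBy (Additive Kˣ) ℤ := divKx
  let e := LinearMap.quotKerEquivRange B
  let dbar := Submodule.liftQ (LinearMap.ker B) dhat hle
  let h0 : LinearMap.range B →ₗ[ℤ] Additive Kˣ := dbar ∘ₗ e.symm.toLinearMap
  obtain ⟨g, hg⟩ := (Module.Baer.of_divisible (Additive Kˣ)).extension_property
    (LinearMap.range B).subtype (Submodule.injective_subtype _) h0
  have hgB : ∀ γ : Fin N → ℤ, g (B γ) = Additive.ofMul (∏ i, d i ^ γ i) := by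
    intro γ
    have h2 := LinearMap.ext_iff.mp hg ⟨B γ, LinearMap.mem_range_self B γ⟩
    simp only [LinearMap.coe_comp, Function.comp_apply, Submodule.coe_subtype] at h2
    rw [h2]
    show dbar (e.symm ⟨B γ, LinearMap.mem_range_self B γ⟩) = _
    have h3 : e.symm ⟨B γ, LinearMap.mem_range_self B γ⟩ = Submodule.Quotient.mk γ := by
      apply e.injective
      rw [LinearEquiv.apply_symm_apply]
      exact Subtype.ext (LinearMap.quotKerEquivRange_apply_mk B γ)
    rw [h3]
    exact Submodule.liftQ_apply _ _ _
  let ee : Fin N → (Fin N → ℤ) := fun i l => if l = i then 1 else 0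
  let em : Fin m → (Fin m → ℤ) := fun j l => if l = j then 1 else 0
  refine ⟨fun j => Additive.toMul (g (em j)), fun i => ?_⟩
  have h1 : B (ee i) = fun j => A i j := by
    funext j
    rw [hBapply]
    have : ∀ l : Fin N, ee i l * A l j = if l = i then A l j else 0 := by
      intro l; simp only [ee]; split <;> simp
    rw [Finset.sum_congr rfl fun l _ => this l, Finset.sum_ite_eq' univ i (fun l => A l j)]
    simp
  have h2 : (∏ l, d l ^ ee i l) = d i := by
    have : ∀ l : Fin N, d l ^ ee i l = if l = i then d l else 1 := by
      intro l; simp only [ee]; split <;> simp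
    rw [Finset.prod_congr rfl fun l _ => this l, Finset.prod_ite_eq' univ i d]
    simp
  have h3 : ∀ v : Fin m → ℤ,
      Additive.toMul (g v) = ∏ j, Additive.toMul (g (em j)) ^ v j := by
    intro v
    have hv : v = ∑ j, v j • em j := by
      funext l
      rw [Finset.sum_apply]
      have : ∀ j : Fin m, (v j • em j) l = if l = j then v j else 0 := by
        intro j; simp only [em, Pi.smul_apply, smul_eq_mul]; split <;> simp
      rw [Finset.sum_congr rfl fun j _ => this j, Finset.sum_ite_eq univ l v]
      simp
    conv_lhs => rw [hv]
    rw [map_sum, toMul_sum]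
    exact Finset.prod_congr rfl fun j _ => by rw [map_zsmul, toMul_zsmul]
  have h5 := hgB (ee i)
  rw [h1, h2] at h5
  have h4 : d i = Additive.toMul (g (fun j => A i j)) := by
    rw [h5]; rfl
  rw [h4, h3]


/-- Let `S` be a proper subtorus of the maximal torus
`T = {d : diagonal | ∏ d i = 1}` of `G = SL_{n+1}(K)`, with `C_G(S) = T`, and let
`W(S) = N_G(S)/C_G(S)`, viewed as a subgroup of the Weyl group `Sym_{n+1}` — concretely,
the stabilizer of `S` in `Sym_{n+1}` acting on the diagonal torus by permuting coordinates.
Then `W(S)` is not `2`-transitive on `{1, …, n+1}`.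

Here a subtorus is (concretely) the image of a morphism of tori given by an integer matrix
of exponents, and the condition `C_G(S) = T` is expressed by the weights of `S` on the
natural module being pairwise distinct: for all `i ≠ j` some `d ∈ S` has `d i ≠ d j`. -/
theorem stmt_14 {K : Type*} [Field K] [IsAlgClosed K] (n : ℕ) (hn : 1 ≤ n)
    (T S : Subgroup (Fin (n + 1) → Kˣ))
    (hT : ∀ d : Fin (n + 1) → Kˣ, d ∈ T ↔ (∏ i, d i) = 1)
    (hsubtorus : ∃ (m : ℕ) (A : Fin (n + 1) → Fin m → ℤ),
      ∀ d : Fin (n + 1) → Kˣ, d ∈ S ↔ ∃ x : Fin m → Kˣ, ∀ i, d i = ∏ j, x j ^ A i j)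
    (hST : S < T)
    (hcent : ∀ i j : Fin (n + 1), i ≠ j → ∃ d ∈ S, d i ≠ d j) :
    ¬ ∀ (i₁ i₂ j₁ j₂ : Fin (n + 1)), i₁ ≠ i₂ → j₁ ≠ j₂ →
      ∃ σ : Equiv.Perm (Fin (n + 1)),
        (∀ d ∈ S, (fun i => d (σ i)) ∈ S) ∧ σ i₁ = j₁ ∧ σ i₂ = j₂ := by
  classical
  intro h2
  obtain ⟨m, A, hA⟩ := hsubtorus
  have hSle : S ≤ T := hST.le
  have hprod1 : ∀ d ∈ S, (∏ i, d i) = 1 := fun d hd => (hT d).mp (hSle hd)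
  have hne01 : (⟨0, by omega⟩ : Fin (n + 1)) ≠ ⟨1, by omega⟩ := by
    simp [Fin.ext_iff]
  -- Step 1: there is a nonconstant integer vector γ with ∏ dᵢ^γᵢ = 1 on S.
  have hexists : ∃ γ : Fin (n + 1) → ℤ,
      (∀ d ∈ S, (∏ i, d i ^ γ i) = 1) ∧ ∃ a b, γ a ≠ γ b := by
    by_contra hcon
    push_neg at hcon
    have hTS : T ≤ S := by
      intro d hd
      have hdprod : (∏ i, d i) = 1 := (hT d).mp hd
      refine (hA d).mpr (mem_image_of_ker A d ?_)
      intro γ hγ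
      have hPS : ∀ e ∈ S, (∏ i, e i ^ γ i) = 1 := by
        intro e he
        obtain ⟨x, hx⟩ := (hA e).mp he
        rw [Finset.prod_congr rfl fun i _ => by rw [hx i], prod_swap_exp,
          Finset.prod_congr rfl fun j _ => by rw [hγ j, zpow_zero]]
        exact Finset.prod_const_one
      have hc := hcon γ hPS
      calc (∏ i, d i ^ γ i)
          = ∏ i, d i ^ γ (⟨0, by omega⟩ : Fin (n + 1)) :=
            Finset.prod_congr rfl fun i _ => by rw [hc i ⟨0, by omega⟩]
        _ = (∏ i, d i) ^ γ (⟨0, by omega⟩ : Fin (n + 1)) := Finset.prod_zpow _ _ _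
        _ = 1 := by rw [hdprod, one_zpow]
    exact hST.ne (le_antisymm hSle hTS)
  obtain ⟨γ, hγS, a, b, hab⟩ := hexists
  -- the stabilizer of S
  let Wp : Equiv.Perm (Fin (n + 1)) → Prop := fun σ => ∀ d ∈ S, (fun i => d (σ i)) ∈ S
  have hWone : Wp 1 := fun d hd => hd
  have hWmul : ∀ σ τ, Wp σ → Wp τ → Wp (σ * τ) := by
    intro σ τ hσ hτ d hd
    exact hτ _ (hσ d hd)
  have hWpow : ∀ σ, Wp σ → ∀ p : ℕ, Wp (σ ^ p) := by
    intro σ hσ p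
    induction p with
    | zero => rw [pow_zero]; exact hWone
    | succ p ih => rw [pow_succ]; exact hWmul _ _ ih hσ
  have hWinv : ∀ σ, Wp σ → Wp σ⁻¹ := by
    intro σ hσ
    have hpos : 0 < orderOf σ := orderOf_pos σ
    have heq : σ⁻¹ = σ ^ (orderOf σ - 1) := by
      refine inv_eq_of_mul_eq_one_right ?_
      rw [← pow_succ', Nat.sub_add_cancel hpos]
      exact pow_orderOf_eq_one σ
    rw [heq]
    exact hWpow σ hσ _
  let WF : Finset (Equiv.Perm (Fin (n + 1))) := Finset.univ.filter Wp
  let F : Fin (n + 1) → Fin (n + 1) → Fin (n + 1) → Fin (n + 1) →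
      Finset (Equiv.Perm (Fin (n + 1))) :=
    fun i k a b => WF.filter (fun σ => σ i = a ∧ σ k = b)
  have hWFmem : ∀ σ, σ ∈ WF ↔ Wp σ := by
    intro σ
    simp only [WF, Finset.mem_filter, Finset.mem_univ, true_and]
  -- card of F is independent of the target pair
  have lemA : ∀ (i k a b a' b' : Fin (n + 1)), a ≠ b → a' ≠ b' →
      (F i k a b).card = (F i k a' b').card := by
    intro i k a b a' b' hab' ha'b'
    obtain ⟨τ, hτW, hτ1, hτ2⟩ := h2 a b a' b' hab' ha'b'
    refine Finset.card_nbij' (fun σ => τ * σ) (fun σ => τ⁻¹ * σ) ?_ ?_ ?_ ?_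
    · intro σ hσ
      obtain ⟨hσW, hσ1, hσ2⟩ := Finset.mem_filter.mp hσ
      refine Finset.mem_filter.mpr ⟨(hWFmem _).mpr (hWmul _ _ hτW ((hWFmem _).mp hσW)), ?_, ?_⟩
      · show τ (σ i) = a'; rw [hσ1, hτ1]
      · show τ (σ k) = b'; rw [hσ2, hτ2]
    · intro σ hσ
      obtain ⟨hσW, hσ1, hσ2⟩ := Finset.mem_filter.mp hσ
      refine Finset.mem_filter.mpr
        ⟨(hWFmem _).mpr (hWmul _ _ (hWinv _ hτW) ((hWFmem _).mp hσW)), ?_, ?_⟩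
      · show τ⁻¹ (σ i) = a; rw [hσ1, ← hτ1, Equiv.Perm.inv_def, Equiv.symm_apply_apply]
      · show τ⁻¹ (σ k) = b; rw [hσ2, ← hτ2, Equiv.Perm.inv_def, Equiv.symm_apply_apply]
    · intro σ _; simp [mul_assoc]
    · intro σ _; simp [← mul_assoc]
  have lemB : ∀ (i k k' a b : Fin (n + 1)), i ≠ k → i ≠ k' →
      (F i k a b).card = (F i k' a b).card := by
    intro i k k' a b hik hik'
    obtain ⟨ρ, hρW, hρ1, hρ2⟩ := h2 i k' i k hik' hik
    refine Finset.card_nbij' (fun σ => σ * ρ) (fun σ => σ * ρ⁻¹) ?_ ?_ ?_ ?_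
    · intro σ hσ
      obtain ⟨hσW, hσ1, hσ2⟩ := Finset.mem_filter.mp hσ
      refine Finset.mem_filter.mpr
        ⟨(hWFmem _).mpr (hWmul _ _ ((hWFmem _).mp hσW) hρW), ?_, ?_⟩
      · show σ (ρ i) = a; rw [hρ1, hσ1]
      · show σ (ρ k') = b; rw [hρ2, hσ2]
    · intro σ hσ
      obtain ⟨hσW, hσ1, hσ2⟩ := Finset.mem_filter.mp hσ
      refine Finset.mem_filter.mpr
        ⟨(hWFmem _).mpr (hWmul _ _ ((hWFmem _).mp hσW) (hWinv _ hρW)), ?_, ?_⟩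
      · show σ (ρ⁻¹ i) = a
        have h3 : ρ⁻¹ i = i := Equiv.Perm.inv_eq_iff_eq.mpr hρ1.symm
        rw [h3, hσ1]
      · show σ (ρ⁻¹ k) = b
        have h3 : ρ⁻¹ k = k' := Equiv.Perm.inv_eq_iff_eq.mpr hρ2.symm
        rw [h3, hσ2]
    · intro σ _; simp [mul_assoc]
    · intro σ _; simp [mul_assoc]
  -- choose a₀ with (n+1) γ a₀ ≠ ∑ γ
  have hNa : ∃ a₀ : Fin (n + 1), ((n : ℤ) + 1) * γ a₀ ≠ ∑ l, γ l := by
    by_contra hcc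
    push_neg at hcc
    apply hab
    have hne : ((n : ℤ) + 1) ≠ 0 := by positivity
    exact mul_left_cancel₀ hne ((hcc a).trans (hcc b).symm)
  obtain ⟨a₀, ha₀⟩ := hNa
  -- key step: every coordinate is killed by a nonzero exponent on S
  have key : ∀ i : Fin (n + 1), ∃ c : ℤ, c ≠ 0 ∧ ∀ d ∈ S, d i ^ c = 1 := by
    intro i
    obtain ⟨k₀, hk₀⟩ : ∃ k₀ : Fin (n + 1), k₀ ≠ i := by
      rcases eq_or_ne i ⟨0, by omega⟩ with h | h
      · exact ⟨⟨1, by omega⟩, by rw [h]; exact hne01.symm⟩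
      · exact ⟨⟨0, by omega⟩, Ne.symm h⟩
    obtain ⟨b₀, hb₀⟩ : ∃ b₀ : Fin (n + 1), b₀ ≠ a₀ := by
      rcases eq_or_ne a₀ ⟨0, by omega⟩ with h | h
      · exact ⟨⟨1, by omega⟩, by rw [h]; exact hne01.symm⟩
      · exact ⟨⟨0, by omega⟩, Ne.symm h⟩
    set Fa : Finset (Equiv.Perm (Fin (n + 1))) := WF.filter (fun σ => σ i = a₀) with hFa
    set M : ℕ := (F i k₀ a₀ b₀).card with hMdef
    have hM1 : ∀ l b, l ≠ i → b ≠ a₀ → (F i l a₀ b).card = M := by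
      intro l b hl hb
      calc (F i l a₀ b).card = (F i k₀ a₀ b).card :=
            lemB i l k₀ a₀ b (fun hh => hl hh.symm) (fun hh => hk₀ hh.symm)
        _ = M := lemA i k₀ a₀ b a₀ b₀ (fun hh => hb hh.symm) (fun hh => hb₀ hh.symm)
    have hM0 : 1 ≤ M := by
      obtain ⟨σ, hσW, hσ1, hσ2⟩ := h2 i k₀ a₀ b₀ (fun hh => hk₀ hh.symm) (fun hh => hb₀ hh.symm)
      refine Finset.card_pos.mpr ⟨σ, ?_⟩
      exact Finset.mem_filter.mpr ⟨(hWFmem _).mpr hσW, hσ1, hσ2⟩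
    -- fiberwise sums
    have subl : ∀ l, l ≠ i → ∀ f : Fin (n + 1) → ℤ,
        (∑ σ ∈ Fa, f (σ l)) = ∑ c ∈ Finset.univ.erase a₀, (M : ℤ) * f c := by
      intro l hl f
      rw [← Finset.sum_fiberwise Fa (fun σ => σ l) (fun σ => f (σ l))]
      rw [← Finset.sum_erase_add Finset.univ _ (Finset.mem_univ a₀)]
      have hinner0 : Fa.filter (fun σ => σ l = a₀) = ∅ := by
        rw [Finset.filter_eq_empty_iff]
        intro σ hσ heq
        have hi : σ i = a₀ := (Finset.mem_filter.mp hσ).2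
        exact hl (σ.injective (heq.trans hi.symm))
      have hsplit : ∀ c ∈ Finset.univ.erase a₀,
          (∑ σ ∈ Fa.filter (fun σ => σ l = c), f (σ l)) = (M : ℤ) * f c := by
        intro c hc
        have hcne : c ≠ a₀ := (Finset.mem_erase.mp hc).1
        have hfil : Fa.filter (fun σ => σ l = c) = F i l a₀ c := by
          rw [hFa, Finset.filter_filter]
        rw [hfil, Finset.sum_congr rfl fun σ hσ => by
          rw [(Finset.mem_filter.mp hσ).2.2], Finset.sum_const, hM1 l c hl hcne,
          nsmul_eq_mul]
      rw [hinner0]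
      simp only [Finset.sum_empty, add_zero]
      exact Finset.sum_congr rfl hsplit
    set w : Fin (n + 1) → ℤ := fun l => ∑ σ ∈ Fa, γ (σ l) with hw
    set s' : ℤ := ∑ c ∈ Finset.univ.erase a₀, γ c with hs'
    have hwl : ∀ l, l ≠ i → w l = (M : ℤ) * s' := by
      intro l hl
      rw [hw]
      simp only
      rw [subl l hl γ, hs', Finset.mul_sum]
    have hcard : (Fa.card : ℤ) = (n : ℤ) * (M : ℤ) := by
      have h1 := subl k₀ hk₀ (fun _ => (1 : ℤ))
      rw [Finset.sum_const, Finset.sum_const] at h1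
      rw [Finset.card_erase_of_mem (Finset.mem_univ a₀), Finset.card_univ,
        Fintype.card_fin] at h1
      simp only [nsmul_eq_mul, mul_one] at h1
      rw [h1]
      push_cast
      ring
    have hwi : w i = (n : ℤ) * (M : ℤ) * γ a₀ := by
      rw [hw]
      simp only
      rw [Finset.sum_congr rfl fun σ hσ => by rw [(Finset.mem_filter.mp hσ).2],
        Finset.sum_const, nsmul_eq_mul, hcard]
    have hw1 : ∀ d ∈ S, (∏ l, d l ^ w l) = 1 := by
      intro d hd
      rw [Finset.prod_congr rfl fun l _ => (zpow_sum' (d l) Fa (fun σ => γ (σ l)) :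
        d l ^ w l = _), Finset.prod_comm]
      refine Finset.prod_eq_one fun σ hσ => ?_
      have hσW : Wp σ := (hWFmem _).mp (Finset.mem_filter.mp hσ).1
      have hdσ : (fun l => d (σ⁻¹ l)) ∈ S := hWinv σ hσW d hd
      calc (∏ l, d l ^ γ (σ l)) = ∏ l, d (σ⁻¹ (σ l)) ^ γ (σ l) :=
            Finset.prod_congr rfl fun l _ => by rw [Equiv.Perm.inv_def, Equiv.symm_apply_apply]
        _ = ∏ l, d (σ⁻¹ l) ^ γ l := Equiv.prod_comp σ (fun l => d (σ⁻¹ l) ^ γ l)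
        _ = 1 := hγS _ hdσ
    refine ⟨(M : ℤ) * ((n : ℤ) * γ a₀ - s'), ?_, ?_⟩
    · have hMz : (M : ℤ) ≠ 0 := Int.natCast_ne_zero.mpr (by omega)
      refine mul_ne_zero hMz ?_
      intro hzz
      apply ha₀
      have h1 : (n : ℤ) * γ a₀ = s' := by linarith [sub_eq_zero.mp hzz]
      have h2' : (∑ l, γ l) = γ a₀ + s' := by
        rw [hs', ← Finset.add_sum_erase Finset.univ γ (Finset.mem_univ a₀)]
      rw [h2', ← h1]
      ring
    · intro d hd
      have h1 := hw1 d hd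
      have hsplit : ∀ l, d l ^ w l =
          d l ^ ((M : ℤ) * s') * d l ^ (if l = i then w i - (M : ℤ) * s' else 0) := by
        intro l
        rcases eq_or_ne l i with rfl | hl
        · rw [if_pos rfl, ← zpow_add]
          congr 1
          ring
        · rw [if_neg hl, hwl l hl, zpow_zero, mul_one]
      rw [Finset.prod_congr rfl fun l _ => hsplit l, Finset.prod_mul_distrib,
        Finset.prod_zpow, hprod1 d hd, one_zpow, one_mul,
        Fintype.prod_eq_single i (fun l hl => by rw [if_neg hl, zpow_zero]),
        if_pos rfl] at h1
      have heq : w i - (M : ℤ) * s' = (M : ℤ) * ((n : ℤ) * γ a₀ - s') := by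
        rw [hwi]; ring
      rw [heq] at h1
      exact h1
  -- every coordinate of S is trivial, contradicting hcent
  have hrow : ∀ i : Fin (n + 1), ∀ d ∈ S, d i = 1 := by
    intro i d hd
    obtain ⟨c, hc, hkill⟩ := key i
    obtain ⟨x, hx⟩ := (hA d).mp hd
    have hAij : ∀ j, A i j = 0 := by
      intro j
      have hz : ∀ t : Kˣ, t ^ (A i j * c) = 1 := by
        intro t
        set x' : Fin m → Kˣ := fun j' => if j' = j then t else 1 with hx'
        have hd' : (fun i' => ∏ j', x' j' ^ A i' j') ∈ S := (hA _).mpr ⟨x', fun _ => rfl⟩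
        have hk := hkill _ hd'
        have hxp : (∏ j', x' j' ^ A i j') = t ^ A i j := by
          rw [Fintype.prod_eq_single j (fun j' hj' => by
            simp only [hx', if_neg hj', one_zpow])]
          simp only [hx', if_pos rfl]
        rw [hxp, ← zpow_mul] at hk
        exact hk
      rcases mul_eq_zero.mp (exp_zero hz) with h | h
      · exact h
      · exact absurd h hc
    rw [hx i, Finset.prod_congr rfl fun j _ => by rw [hAij j, zpow_zero]]
    exact Finset.prod_const_one
  obtain ⟨d, hd, hdne⟩ := hcent ⟨0, by omega⟩ ⟨1, by omega⟩ hne01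
  exact hdne (by rw [hrow _ d hd, hrow _ d hd])
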